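/- Define g(n) = ⌈(3/2)n⌉ on ℤ, i.e., g(n) = 3n/2 if n is even and g(n) = (3n+1)/2 if n is odd. Then for every integer n with n ≠ -1, there exists j ≥ 1 such that g^(j)(n) is even. -/

import Mathlib

private lemma mahler_f_eq (m : ℤ) : ⌈(3 * m : ℚ) / 2⌉ = (3 * m + 1) / 2 := by
  have h := Int.mul_ediv_add_emod (3 * m + 1) 2
  have h2 := Int.emod_nonneg (3 * m + 1) (by norm_num : (2:ℤ) ≠ 0)
  have h3 := Int.emod_lt_of_pos (3 * m + 1) (by norm_num : (0:ℤ) < 2)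
  rw [Int.ceil_eq_iff]
  constructor
  · have : (2:ℚ) * ((3 * m + 1) / 2 : ℤ) ≤ 3 * m + 1 := by
      exact_mod_cast (by omega : 2 * ((3 * m + 1) / 2) ≤ 3 * m + 1)
    linarith
  · have : (3:ℚ) * m + 1 ≤ 2 * ((3 * m + 1) / 2 : ℤ) + 1 := by
      exact_mod_cast (by omega : 3 * m + 1 ≤ 2 * ((3 * m + 1) / 2) + 1)
    linarith

private lemma mahler_aux (k : ℕ) : ∀ n : ℤ, ¬ ((2:ℤ)^k ∣ n + 1) →
    ∃ j : ℕ, Even ((fun m : ℤ => ⌈(3 * m : ℚ) / 2⌉)^[j] n) := by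
  induction k with
  | zero => intro n h; exact absurd (by rw [pow_zero]; exact one_dvd _) h
  | succ k ih =>
    intro n h
    by_cases he : Even n
    · exact ⟨0, he⟩
    · have hodd : Odd n := Int.not_even_iff_odd.mp he
      obtain ⟨t, ht⟩ := hodd
      have hfn : ⌈(3 * n : ℚ) / 2⌉ = 3 * t + 2 := by
        rw [mahler_f_eq]; omega
      have hnd : ¬ ((2:ℤ)^k ∣ (3 * t + 2) + 1) := by
        intro hd
        have hc : IsCoprime ((2:ℤ)^k) 3 :=
          IsCoprime.pow_left ⟨-1, 1, by ring⟩
        have : (3 * t + 2) + 1 = (t + 1) * 3 := by ring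
        rw [this] at hd
        have := hc.dvd_of_dvd_mul_right hd
        apply h
        have : n + 1 = 2 * (t + 1) := by omega
        rw [this, pow_succ, mul_comm ((2:ℤ)^k) 2]
        exact mul_dvd_mul_left 2 ‹(2:ℤ)^k ∣ t + 1›
      obtain ⟨j, hj⟩ := ih (3 * t + 2) hnd
      refine ⟨j + 1, ?_⟩
      rw [Function.iterate_succ_apply]
      simpa [hfn] using hj

theorem mahler_map_reaches_even (n : ℤ) (hn : n ≠ -1) :
    ∃ j : ℕ, 1 ≤ j ∧ Even ((fun m : ℤ => ⌈(3 * m : ℚ) / 2⌉)^[j] n) := by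
  set f : ℤ → ℤ := fun m : ℤ => ⌈(3 * m : ℚ) / 2⌉ with hf
  have key : ∀ m : ℤ, m ≠ -1 → ∃ j : ℕ, Even (f^[j] m) := by
    intro m hm
    apply mahler_aux (m + 1).natAbs
    intro hd
    have hne : m + 1 ≠ 0 := by omega
    have h1 : ((2:ℤ)) ^ (m+1).natAbs ≤ |m + 1| :=
      Int.le_of_dvd (abs_pos.mpr hne) ((dvd_abs _ _).mpr hd)
    have h2 : |m + 1| = ((m+1).natAbs : ℤ) := Int.abs_eq_natAbs _
    have h3 : ((m+1).natAbs : ℤ) < 2 ^ (m+1).natAbs := by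
      exact_mod_cast Nat.lt_two_pow_self (n := (m+1).natAbs)
    omega
  have hfn : f n ≠ -1 := by
    have := mahler_f_eq n
    simp only [hf]
    rw [this]
    omega
  obtain ⟨j, hj⟩ := key (f n) hfn
  exact ⟨j + 1, Nat.succ_le_succ (Nat.zero_le j), by
    rw [Function.iterate_succ_apply]; exact hj⟩
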